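/- The halting problem is Turing reducible to the busy beaver function: if an oracle computes B(n) for every n, then one can decide whether a given code e halts on input 0. Concretely: φ_e(0) halts if and only if φ_e(0) halts within B(e) steps. -/
import Mathlib


open Nat.Partrec (Code)
open scoped Classical

/-- The halting time of code `e` on input `0`: the least number of steps `k`
such that `evaln k e 0` converges (`0` if it never converges). -/
noncomputable def haltTime (e : ℕ) : ℕ :=
  sInf {k : ℕ | (Nat.Partrec.Code.evaln k (Denumerable.ofNat Code e) 0).isSome}

/-- The busy beaver function: the maximal halting time on input `0` among codes
`e ≤ n` that halt on input `0`. -/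
noncomputable def busyBeaver (n : ℕ) : ℕ :=
  ((Finset.range (n + 1)).filter
    (fun e => ((Denumerable.ofNat Code e).eval 0).Dom)).sup haltTime

/-- The halting problem (on input `0`) is decidable from the busy beaver
function: `φ_e(0)` halts if and only if `φ_e(0)` halts within `B(e)` steps. -/
theorem halting_reducible_to_busyBeaver (e : ℕ) :
    ((Denumerable.ofNat Code e).eval 0).Dom ↔
      (Nat.Partrec.Code.evaln (busyBeaver e) (Denumerable.ofNat Code e) 0).isSome := by
  constructor
  · intro h
    obtain ⟨x, hx⟩ := Part.dom_iff_mem.1 h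
    obtain ⟨k, hk⟩ := Nat.Partrec.Code.evaln_complete.1 hx
    have hne : {k : ℕ | (Nat.Partrec.Code.evaln k (Denumerable.ofNat Code e) 0).isSome}.Nonempty :=
      ⟨k, Option.isSome_iff_exists.2 ⟨x, hk⟩⟩
    have hht : (Nat.Partrec.Code.evaln (haltTime e) (Denumerable.ofNat Code e) 0).isSome :=
      Nat.sInf_mem hne
    obtain ⟨y, hy⟩ := Option.isSome_iff_exists.1 hht
    have hle : haltTime e ≤ busyBeaver e := by
      apply Finset.le_sup
      simp [Finset.mem_filter, Finset.mem_range, h]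
    exact Option.isSome_iff_exists.2 ⟨y, Nat.Partrec.Code.evaln_mono hle hy⟩
  · intro h
    obtain ⟨y, hy⟩ := Option.isSome_iff_exists.1 h
    exact Part.dom_iff_mem.2 ⟨y, Nat.Partrec.Code.evaln_sound hy⟩
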